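/- arXiv:1611.08120 — 2 statements merged into one kernel-verified Lean document; each statement's English description precedes it below -/
import Mathlib

section
/- Let p be an odd prime with Pisano period l_p = p−1 and β(p) = 4, and let C = ⟨f(x)⟩ be the cyclic code of length p−1 over F_p generated by the Fibonacci polynomial f(x). Then the weight distribution of C is: A_0 = 1, A_{p−5} = (p−1)²/4, A_{p−1} = (p−1)(3p+5)/4, and A_w = 0 for all other weights w, where A_w denotes the number of codewords of C of Hamming weight w. -/
open Polynomial

/-- The Fibonacci sequence over `ZMod p`: `F 0 = 0`, `F 1 = 1`, `F (n+2) = F (n+1) + F n`. -/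
def fibMod (p : ℕ) : ℕ → ZMod p
  | 0 => 0
  | 1 => 1
  | n + 2 => fibMod p (n + 1) + fibMod p n

/-- The Pisano period of `p`: the least `t > 0` with `F t = F 0 = 0` and `F (t+1) = F 1 = 1`. -/
noncomputable def pisano (p : ℕ) : ℕ :=
  sInf {t : ℕ | 0 < t ∧ fibMod p t = 0 ∧ fibMod p (t + 1) = 1}

/-- `β(p)`: the number of indices `0 ≤ i < l_p` with `F i = 0` in `ZMod p`. -/
noncomputable def betaP (p : ℕ) : ℕ :=
  ((Finset.range (pisano p)).filter fun i => fibMod p i = 0).card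

/-- The Fibonacci polynomial `f(x) = ∑_{i=0}^{l_p - 1} F_i x^i` over `ZMod p`. -/
noncomputable def fibPoly (p : ℕ) : (ZMod p)[X] :=
  ∑ i ∈ Finset.range (pisano p), C (fibMod p i) * X ^ i

/-- Cyclic shift of a vector of length `l`: the shift `v ↦ (v_{l-1}, v_0, …, v_{l-2})`,
which corresponds to multiplication by `x` modulo `x^l - 1` on coefficient vectors. -/
def cyclicShift (p l : ℕ) (v : Fin l → ZMod p) : Fin l → ZMod p :=
  fun i => v ⟨((i : ℕ) + (l - 1)) % l, Nat.mod_lt _ i.pos⟩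

/-- The coefficient vector of length `l` of a polynomial. -/
def polyVec (p l : ℕ) (g : (ZMod p)[X]) : Fin l → ZMod p := fun i => g.coeff i

/-- The cyclic code of length `l` generated by `g`: the ideal generated by the image of `g`
in `F_p[x]/(x^l - 1)`, identified with the subspace of `F_p^l` of coefficient vectors via
`a_0 + a_1 x + ⋯ + a_{l-1} x^{l-1} ↦ (a_0, …, a_{l-1})`; equivalently (since multiplication
by `x` is the cyclic shift), the `F_p`-span of all cyclic shifts of the coefficient vector
of `g`. -/
noncomputable def cyclicCode (p l : ℕ) (g : (ZMod p)[X]) :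
    Submodule (ZMod p) (Fin l → ZMod p) :=
  Submodule.span (ZMod p) {w | ∃ k : ℕ, w = (cyclicShift p l)^[k] (polyVec p l g)}

/-- The cyclic code of length `l` generated by the Fibonacci polynomial `f(x)`. -/
noncomputable def fibCode (p l : ℕ) : Submodule (ZMod p) (Fin l → ZMod p) :=
  cyclicCode p l (fibPoly p)


open Finset

lemma fibMod_add_two (p n : ℕ) : fibMod p (n+2) = fibMod p (n+1) + fibMod p n := rfl

lemma binet_aux (p : ℕ) {A : Type*} [CommRing A] [Algebra (ZMod p) A] (a : A) (ha : a^2 = a + 1) :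
    ∀ m, a^(m+1) = algebraMap (ZMod p) A (fibMod p (m+1)) * a + algebraMap (ZMod p) A (fibMod p m)
  | 0 => by simp [fibMod]
  | 1 => by simpa [fibMod, pow_two] using ha
  | (m+2) => by
    have h2 := binet_aux p a ha (m+1)
    have h3 : a^(m+2+1) = a^(m+1+1) * a := by ring
    rw [h3, h2, fibMod_add_two p (m+1), map_add]
    linear_combination (algebraMap (ZMod p) A (fibMod p (m+1+1))) * ha

lemma pow_period_of_root (p n : ℕ) {A : Type*} [CommRing A] [Algebra (ZMod p) A]
    (hFn : fibMod p n = 0) (hFn1 : fibMod p (n+1) = 1)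
    (a : A) (ha : a^2 = a + 1) : a ^ n = 1 := by
  have hb := binet_aux p a ha n
  rw [hFn, hFn1, map_one, map_zero, one_mul, add_zero] at hb
  have hu : a * (a - 1) = 1 := by linear_combination ha
  have : a * a ^ n = a * 1 := by rw [mul_one, mul_comm, ← pow_succ]; exact hb
  exact (IsUnit.of_mul_eq_one (a-1) hu).mul_left_cancel this

lemma exists_fib_root (p : ℕ) [Fact p.Prime] (hp2 : 2 < p)
    (hFn : fibMod p (p-1) = 0) (hFn1 : fibMod p (p-1+1) = 1) :
    ∃ a : ZMod p, a ^ 2 = a + 1 := by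
  have hprime : p.Prime := Fact.out
  set n := p - 1 with hn
  have hn1 : n + 1 = p := by omega
  set q : (ZMod p)[X] := X^2 - X - 1 with hq
  have hqm : q.Monic := by unfold q; monicity!
  set a := AdjoinRoot.root q with ha
  have hroot : a^2 = a + 1 := by
    have h := AdjoinRoot.eval₂_root q
    rw [hq] at h
    simp only [eval₂_sub, eval₂_pow, eval₂_X, eval₂_one] at h
    linear_combination h
  have han : a ^ n = 1 := pow_period_of_root p n hFn hFn1 a hroot
  set g : (ZMod p)[X] := EuclideanDomain.gcd q (X^n - 1) with hg
  have h1 : (aeval a) q = 0 := by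
    rw [AdjoinRoot.aeval_eq, AdjoinRoot.mk_self]
  have h2 : (aeval a) (X^n - 1 : (ZMod p)[X]) = 0 := by
    simp only [map_sub, map_pow, aeval_X, map_one, han, sub_self]
  have hg0 : (aeval a) g = 0 := by
    rw [hg, EuclideanDomain.gcd_eq_gcd_ab q (X^n - 1), map_add, map_mul, map_mul, h1, h2,
      zero_mul, zero_mul, add_zero]
  have hgne : g ≠ 0 := by
    rw [hg, Ne, EuclideanDomain.gcd_eq_zero_iff]
    rintro ⟨h, -⟩
    exact hqm.ne_zero h
  have hqd : q.natDegree = 2 := by unfold q; compute_degree!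
  have hnd : g.natDegree ≠ 0 := by
    intro h
    obtain ⟨c, hc⟩ := Polynomial.natDegree_eq_zero.mp h
    have hc0 : algebraMap (ZMod p) (AdjoinRoot q) c = 0 := by
      rw [← aeval_C a c, hc, hg0]
    rw [AdjoinRoot.algebraMap_eq, ← AdjoinRoot.mk_C, AdjoinRoot.mk_eq_zero] at hc0
    rcases eq_or_ne c 0 with rfl | hcne
    · exact hgne (by rw [← hc, map_zero])
    · have := Polynomial.natDegree_le_of_dvd hc0 (by simpa using hcne)
      simp [hqd] at this
  have hcard : Fintype.card (ZMod p) = p := ZMod.card p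
  have hXpX_ne : (X^p - X : (ZMod p)[X]) ≠ 0 := by
    have := FiniteField.X_pow_card_sub_X_ne_zero (ZMod p) (by omega : 1 < p)
    exact this
  have hsplits : Splits (X^p - X : (ZMod p)[X]) := by
    rw [splits_iff_card_roots]
    have hr : roots (X^(Fintype.card (ZMod p)) - X : (ZMod p)[X]) = Finset.univ.val :=
      FiniteField.roots_X_pow_card_sub_X (ZMod p)
    rw [hcard] at hr
    rw [hr, FiniteField.X_pow_card_sub_X_natDegree_eq (ZMod p) (by omega : 1 < p)]
    simpa using hcard
  have hdvd : g ∣ (X^p - X : (ZMod p)[X]) := by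
    refine dvd_trans (EuclideanDomain.gcd_dvd_right q (X^n - 1)) ⟨X, ?_⟩
    have hx : (X^p - X : (ZMod p)[X]) = X^(n+1) - X := by rw [hn1]
    rw [hx]; ring
  have hsg : Splits g :=
    hsplits.of_dvd hXpX_ne hdvd
  have hdeg : g.degree ≠ 0 := by
    intro h
    exact hnd (natDegree_eq_zero_iff_degree_le_zero.mpr (le_of_eq h))
  obtain ⟨r, hr⟩ := hsg.exists_eval_eq_zero hdeg
  obtain ⟨h, hh⟩ := EuclideanDomain.gcd_dvd_left q (X^n - 1)
  refine ⟨r, ?_⟩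
  have : q.eval r = 0 := by
    rw [← hg] at hh
    rw [hh, eval_mul]
    have hr' : g.eval r = 0 := hr
    rw [hr', zero_mul]
  rw [hq] at this
  simp only [eval_sub, eval_pow, eval_X, eval_one] at this
  linear_combination this

lemma card_range_filter_mod (d r m : ℕ) (hd : 0 < d) (hr : r < d) :
    ((Finset.range (m * d)).filter fun i => i % d = r).card = m := by
  have h : ((Finset.range (m * d)).filter fun i => i % d = r).card = (Finset.range m).card := by
    refine Finset.card_bij' (fun i _ => i / d) (fun k _ => r + k * d) ?_ ?_ ?_ ?_
    · intro i hi
      simp only [Finset.mem_filter, Finset.mem_range] at hi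
      rw [Finset.mem_range]
      show i / d < m
      have := Nat.div_lt_div_of_lt_of_dvd (dvd_mul_left d m) hi.1
      rwa [Nat.mul_div_cancel _ hd] at this
    · intro k hk
      simp only [Finset.mem_range] at hk
      simp only [Finset.mem_filter, Finset.mem_range]
      refine ⟨?_, ?_⟩
      · calc r + k * d < d + k * d := by omega
          _ = (k+1) * d := by ring
          _ ≤ m * d := Nat.mul_le_mul_right d (by omega)
      · rw [Nat.add_mul_mod_self_right, Nat.mod_eq_of_lt hr]
    · intro i hi
      simp only [Finset.mem_filter, Finset.mem_range] at hi
      show r + (i / d) * d = i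
      have h2 := Nat.div_add_mod i d
      have h3 : d * (i / d) = (i / d) * d := by ring
      omega
    · intro k hk
      show (r + k * d) / d = k
      rw [Nat.add_mul_div_right _ _ hd, Nat.div_eq_of_lt hr, zero_add]
  rw [h, Finset.card_range]

lemma pow_eq_pow_iff_mod {K : Type*} [Monoid K] (γ : K) (hfin : IsOfFinOrder γ) (i j : ℕ) :
    γ ^ i = γ ^ j ↔ i % orderOf γ = j % orderOf γ := by
  constructor
  · intro h
    exact pow_injOn_Iio_orderOf (x := γ) (Nat.mod_lt _ hfin.orderOf_pos)
      (Nat.mod_lt _ hfin.orderOf_pos) (by show γ ^ _ = γ ^ _; rw [pow_mod_orderOf, pow_mod_orderOf, h])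
  · intro h
    rw [← pow_mod_orderOf γ i, ← pow_mod_orderOf γ j, h]

lemma count_pow_eq_of_mem {K : Type*} [Monoid K] [DecidableEq K]
    (γ : K) (n : ℕ) (hn : 0 < n) (hγ : γ ^ n = 1) (j : ℕ) :
    ((Finset.range n).filter fun i => γ ^ i = γ ^ j).card = n / orderOf γ := by
  have hfin : IsOfFinOrder γ := isOfFinOrder_iff_pow_eq_one.mpr ⟨n, hn, hγ⟩
  have hd0 : 0 < orderOf γ := hfin.orderOf_pos
  have hdvd : orderOf γ ∣ n := orderOf_dvd_of_pow_eq_one hγ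
  rw [Finset.filter_congr (fun i _ => by rw [pow_eq_pow_iff_mod γ hfin])]
  obtain ⟨m, hm⟩ := hdvd
  rw [hm, Nat.mul_div_cancel_left m hd0, mul_comm]
  exact card_range_filter_mod _ _ m hd0 (Nat.mod_lt _ hd0)

lemma count_pow_eq_zero {K : Type*} [Monoid K] [DecidableEq K]
    (γ : K) (n : ℕ) (t : K) (ht : ∀ j, γ ^ j ≠ t) :
    ((Finset.range n).filter fun i => γ ^ i = t).card = 0 := by
  rw [Finset.card_eq_zero, Finset.filter_eq_empty_iff]
  exact fun x _ => ht x

lemma card_filter_fin (n : ℕ) (Q : ℕ → Prop) [DecidablePred Q] :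
    ((Finset.univ : Finset (Fin n)).filter fun i => Q i.val).card
      = ((Finset.range n).filter Q).card := by
  rw [Finset.card_filter, Finset.card_filter]
  exact Fin.sum_univ_eq_sum_range (fun j => if Q j then 1 else 0) n

lemma fib_period (p n : ℕ) (hFn : fibMod p n = 0) (hFn1 : fibMod p (n+1) = 1) :
    ∀ m, fibMod p (m + n) = fibMod p m
  | 0 => by simpa [fibMod] using hFn
  | 1 => by rw [add_comm]; simpa [fibMod] using hFn1
  | (m+2) => by
    have h1 := fib_period p n hFn hFn1 m
    have h2 := fib_period p n hFn hFn1 (m+1)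
    rw [show m+2+n = (m+n)+2 by omega, fibMod_add_two, fibMod_add_two, show m+n+1 = m+1+n by omega, h1, h2]

lemma fib_period_mul (p n : ℕ) (hFn : fibMod p n = 0) (hFn1 : fibMod p (n+1) = 1) (m : ℕ) :
    ∀ q, fibMod p (m + n * q) = fibMod p m
  | 0 => by simp
  | (q+1) => by
    rw [show m + n*(q+1) = (m + n*q) + n by ring, fib_period p n hFn hFn1, fib_period_mul p n hFn hFn1 m q]

lemma fib_mod_period (p n : ℕ) (hFn : fibMod p n = 0) (hFn1 : fibMod p (n+1) = 1) (a b : ℕ) :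
    fibMod p (a % n + b) = fibMod p (a + b) := by
  have h := Nat.div_add_mod a n
  conv_rhs => rw [show a + b = (a % n + b) + n * (a / n) by omega]
  rw [fib_period_mul p n hFn hFn1]

def fibE (p n : ℕ) (α β : ZMod p) (uv : ZMod p × ZMod p) : Fin n → ZMod p :=
  fun i => uv.1 * α ^ (i : ℕ) + uv.2 * β ^ (i : ℕ)

lemma binet_zmod (p : ℕ) (α β s : ZMod p) (hα : α^2 = α+1) (hβ2 : β^2 = β+1)
    (hs1 : s * (α - β) = 1) : ∀ m, fibMod p m = s * (α^m - β^m)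
  | 0 => by simp [fibMod]
  | (m+1) => by
    have h1 := binet_aux p (A := ZMod p) α hα m
    have h2 := binet_aux p (A := ZMod p) β hβ2 m
    simp only [Algebra.algebraMap_self_apply] at h1 h2
    linear_combination (-s) * h1 + s * h2 - fibMod p (m+1) * hs1

lemma hamming_compl {n : ℕ} {K : Type*} [DecidableEq K] [Zero K] (x : Fin n → K) :
    hammingNorm x = n - (Finset.univ.filter fun i => x i = 0).card := by
  classical
  have h := Finset.card_filter_add_card_filter_not
    (s := (Finset.univ : Finset (Fin n))) (p := fun i => x i = 0)
  have h2 : hammingNorm x = (Finset.univ.filter fun i => ¬ (x i = 0)).card := by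
    rw [hammingNorm]
  rw [Finset.card_univ, Fintype.card_fin] at h
  omega

lemma fibMod_five_four : fibMod 5 4 = 3 := by decide

lemma three_ne_zero_zmod5 : (3 : ZMod 5) ≠ 0 := by decide

lemma fibCode_mem_iff (p : ℕ) [Fact p.Prime] (hl : pisano p = p - 1) (hp2 : 2 < p)
    (hFn : fibMod p (p-1) = 0) (hFn1 : fibMod p ((p-1)+1) = 1)
    (α β s : ZMod p) (hα : α^2 = α + 1) (hβ : β = 1 - α) (hne : α ≠ β)
    (hs1 : s * (α - β) = 1) (w : Fin (p-1) → ZMod p) :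
    w ∈ fibCode p (p-1) ↔ ∃ uv : ZMod p × ZMod p, w = fibE p (p-1) α β uv := by
  have hnt : Nontrivial (ZMod p) := ZMod.nontrivial_iff.mpr (by omega)
  have hβ2 : β^2 = β + 1 := by rw [hβ]; linear_combination hα
  have hα0 : α ≠ 0 := by
    intro h; rw [h] at hα
    simp only [ne_eq, zero_pow, zero_add] at hα
    exact zero_ne_one (by linear_combination hα)
  have hβ0 : β ≠ 0 := by
    intro h; rw [h] at hβ2
    simp only [ne_eq, zero_pow, zero_add] at hβ2
    exact zero_ne_one (by linear_combination hβ2)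
  set n := p - 1 with hn
  have hpos : 0 < n := by omega
  have hB := binet_zmod p α β s hα hβ2 hs1
  have hαn : α ^ n = 1 := pow_period_of_root p n hFn hFn1 α hα
  have hβn : β ^ n = 1 := pow_period_of_root p n hFn hFn1 β hβ2
  have hαβ : α * β = -1 := by rw [hβ]; linear_combination (-1 : ZMod p) * hα
  have hα1 : α ^ (n-1) = -β := by
    have h1 : α ^ (n-1) * α = (-β) * α := by
      rw [← pow_succ, show n-1+1 = n by omega, hαn]
      linear_combination hαβ
    exact mul_right_cancel₀ hα0 h1
  have hβ1 : β ^ (n-1) = -α := by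
    have h1 : β ^ (n-1) * β = (-α) * β := by
      rw [← pow_succ, show n-1+1 = n by omega, hβn]
      linear_combination hαβ
    exact mul_right_cancel₀ hβ0 h1
  have hvec : polyVec p n (fibPoly p) = fun i : Fin n => fibMod p (i : ℕ) := by
    funext i
    simp only [polyVec, fibPoly, hl, ← hn, Polynomial.finset_sum_coeff,
      Polynomial.coeff_C_mul, Polynomial.coeff_X_pow]
    rw [Finset.sum_eq_single (i : ℕ)]
    · simp
    · intro b _ hbne; simp [Ne.symm hbne]
    · intro h; exact absurd (Finset.mem_range.mpr i.isLt) h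
  have hshift : ∀ k, (cyclicShift p n)^[k] (polyVec p n (fibPoly p))
      = fun i : Fin n => fibMod p ((i : ℕ) + k * (n-1)) := by
    intro k; induction k with
    | zero => simpa using hvec
    | succ k ih =>
      rw [Function.iterate_succ_apply', ih]
      funext i
      simp only [cyclicShift]
      rw [fib_mod_period p n hFn hFn1]
      congr 1; ring
  set e₀ : Fin n → ZMod p := fun i => α ^ (i:ℕ) with he₀
  set e₁ : Fin n → ZMod p := fun i => β ^ (i:ℕ) with he₁
  have hgen : ∀ k : ℕ, (cyclicShift p n)^[k] (polyVec p n (fibPoly p))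
      ∈ Submodule.span (ZMod p) {e₀, e₁} := by
    intro k
    rw [hshift k]
    apply Submodule.mem_span_pair.mpr
    refine ⟨s * α ^ (k * (n-1)), -(s * β ^ (k * (n-1))), ?_⟩
    funext i
    simp only [Pi.add_apply, Pi.smul_apply, smul_eq_mul, he₀, he₁]
    rw [hB ((i:ℕ) + k * (n-1)), pow_add, pow_add]
    ring
  have hle : fibCode p n ≤ Submodule.span (ZMod p) {e₀, e₁} := by
    rw [fibCode, cyclicCode]
    apply Submodule.span_le.mpr
    rintro w' ⟨k, rfl⟩
    exact hgen k
  have hv1 : cyclicShift p n (polyVec p n (fibPoly p))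
      = fun i : Fin n => fibMod p ((i:ℕ) + (n-1)) := by
    have h := hshift 1
    rwa [Function.iterate_one, one_mul] at h
  have hEmem : ∀ u v : ZMod p,
      (fun i : Fin n => u * α ^ (i:ℕ) + v * β ^ (i:ℕ)) ∈ fibCode p n := by
    intro u v
    have h0 : polyVec p n (fibPoly p) ∈ fibCode p n :=
      Submodule.subset_span ⟨0, by simp⟩
    have h1 : cyclicShift p n (polyVec p n (fibPoly p)) ∈ fibCode p n :=
      Submodule.subset_span ⟨1, by simp⟩
    have key : (fun i : Fin n => u * α ^ (i:ℕ) + v * β ^ (i:ℕ))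
        = (α * u + β * v) • polyVec p n (fibPoly p)
          + (u + v) • cyclicShift p n (polyVec p n (fibPoly p)) := by
      rw [hv1, hvec]
      funext i
      simp only [Pi.add_apply, Pi.smul_apply, smul_eq_mul]
      rw [hB (i:ℕ), hB ((i:ℕ) + (n-1)), pow_add, pow_add, hα1, hβ1]
      linear_combination -(u * α ^ (i:ℕ) + v * β ^ (i:ℕ)) * hs1
    rw [key]
    exact Submodule.add_mem _ (Submodule.smul_mem _ _ h0) (Submodule.smul_mem _ _ h1)
  constructor
  · intro hw
    obtain ⟨a, b, hab⟩ := Submodule.mem_span_pair.mp (hle hw)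
    refine ⟨(a, b), ?_⟩
    rw [← hab]
    funext i
    simp only [fibE, Pi.add_apply, Pi.smul_apply, smul_eq_mul, he₀, he₁]
  · rintro ⟨⟨u, v⟩, rfl⟩
    exact hEmem u v


/-- Weight distribution for `l_p = p - 1`, `β(p) = 4`:
`A_0 = 1`, `A_{p-5} = (p-1)²/4`, `A_{p-1} = (p-1)(3p+5)/4`, and `A_w = 0` otherwise. -/
theorem fibCode_weight_distribution_beta_four (p : ℕ) [Fact p.Prime] (hodd : Odd p)
    (hl : pisano p = p - 1) (hb : betaP p = 4) :
    Set.ncard {v | v ∈ fibCode p (p - 1) ∧ hammingNorm v = 0} = 1 ∧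
      Set.ncard {v | v ∈ fibCode p (p - 1) ∧ hammingNorm v = p - 5} = (p - 1) ^ 2 / 4 ∧
      Set.ncard {v | v ∈ fibCode p (p - 1) ∧ hammingNorm v = p - 1}
        = (p - 1) * (3 * p + 5) / 4 ∧
      ∀ w : ℕ, w ≠ 0 → w ≠ p - 5 → w ≠ p - 1 →
        Set.ncard {v | v ∈ fibCode p (p - 1) ∧ hammingNorm v = w} = 0 := by
  classical
  have hnt : Nontrivial (ZMod p) := ZMod.nontrivial_iff.mpr (Fact.out : p.Prime).one_lt.ne'
  have hprime : p.Prime := Fact.out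
  have hp2 : 2 < p := by
    obtain ⟨k, hk⟩ := hodd
    have := hprime.two_le
    omega
  have hpos : 0 < p - 1 := by omega
  have hSmem : pisano p ∈ {t : ℕ | 0 < t ∧ fibMod p t = 0 ∧ fibMod p (t + 1) = 1} := by
    apply Nat.sInf_mem
    by_contra h
    rw [Set.not_nonempty_iff_eq_empty] at h
    have h0 : pisano p = 0 := by rw [pisano, h, Nat.sInf_empty]
    omega
  rw [hl] at hSmem
  obtain ⟨-, hFn, hFn1⟩ := hSmem
  have hp5 : p ≠ 5 := by
    rintro rfl
    rw [show (5:ℕ) - 1 = 4 from rfl, fibMod_five_four] at hFn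
    exact absurd hFn three_ne_zero_zmod5
  obtain ⟨α, hα⟩ := exists_fib_root p hp2 hFn hFn1
  set β : ZMod p := 1 - α with hβ
  have hβ2 : β ^ 2 = β + 1 := by rw [hβ]; linear_combination hα
  have hne : α ≠ β := by
    intro h
    have h5 : ((5 : ℕ) : ZMod p) = 0 := by
      push_cast
      linear_combination (-4 : ZMod p) * hα + (2*α - 1) * h
    rw [ZMod.natCast_eq_zero_iff] at h5
    exact hp5 ((Nat.prime_dvd_prime_iff_eq hprime (by norm_num)).mp h5)
  have hα0 : α ≠ 0 := by
    intro h; rw [h] at hα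
    simp only [ne_eq, zero_pow, zero_add] at hα
    exact zero_ne_one (by linear_combination hα)
  have hβ0 : β ≠ 0 := by
    intro h; rw [h] at hβ2
    simp only [ne_eq, zero_pow, zero_add] at hβ2
    exact zero_ne_one (by linear_combination hβ2)
  have hsub0 : α - β ≠ 0 := sub_ne_zero.mpr hne
  set s : ZMod p := (α - β)⁻¹ with hs
  have hs1 : s * (α - β) = 1 := inv_mul_cancel₀ hsub0
  have hs0 : s ≠ 0 := by
    intro h; rw [h, zero_mul] at hs1; exact zero_ne_one hs1
  have hmem := fibCode_mem_iff p hl hp2 hFn hFn1 α β s hα hβ hne hs1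
  set n : ℕ := p - 1 with hn
  have hB := binet_zmod p α β s hα hβ2 hs1
  have hαn : α ^ n = 1 := pow_period_of_root p n hFn hFn1 α hα
  have hβn : β ^ n = 1 := pow_period_of_root p n hFn hFn1 β hβ2
  set γ : ZMod p := α * β⁻¹ with hγdef
  have hγ0 : γ ≠ 0 := mul_ne_zero hα0 (inv_ne_zero hβ0)
  have hγβ : ∀ i : ℕ, γ ^ i * β ^ i = α ^ i := by
    intro i; rw [← mul_pow]
    congr 1
    exact inv_mul_cancel_right₀ hβ0 α
  have hγn : γ ^ n = 1 := by
    rw [hγdef, mul_pow, inv_pow, hαn, hβn, inv_one, mul_one]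
  have hγ1 : γ ≠ 1 := by
    intro h
    have := hγβ 1
    rw [h, pow_one, pow_one, pow_one, one_mul] at this
    exact hne this.symm
  have hfin : IsOfFinOrder γ := isOfFinOrder_iff_pow_eq_one.mpr ⟨n, hpos, hγn⟩
  set d : ℕ := orderOf γ with hd
  have hd0 : 0 < d := hfin.orderOf_pos
  have hdvd : d ∣ n := orderOf_dvd_of_pow_eq_one hγn
  have hd1 : d ≠ 1 := fun h => hγ1 (orderOf_eq_one_iff.mp h)
  have hzero_iff : ∀ i : ℕ, (fibMod p i = 0 ↔ γ ^ i = 1) := by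
    intro i
    rw [hB i]
    constructor
    · intro h
      rcases mul_eq_zero.mp h with h' | h'
      · exact absurd h' hs0
      · have h2 : α ^ i = β ^ i := by linear_combination h'
        have hβi : β ^ i ≠ 0 := pow_ne_zero i hβ0
        rw [hγdef, mul_pow, inv_pow, h2, mul_inv_cancel₀ hβi]
    · intro h
      have h2 := hγβ i
      rw [h, one_mul] at h2
      rw [← h2]
      ring
  have hb4 : ((Finset.range n).filter fun i => fibMod p i = 0).card = 4 := by
    have := hb
    rw [betaP, hl] at this
    exact this
  have hnd4 : n / d = 4 := by
    rw [Finset.filter_congr (fun i _ => by rw [hzero_iff i])] at hb4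
    have hcount := count_pow_eq_of_mem γ n hpos hγn 0
    rw [pow_zero] at hcount
    rw [hcount] at hb4
    exact hb4
  have hn4d : n = 4 * d := by
    have h := Nat.div_mul_cancel hdvd
    rw [hnd4] at h
    omega
  have hd2 : 2 ≤ d := by omega
  have hn8 : 8 ≤ n := by omega
  -- GS
  set GS : Finset (ZMod p) := (Finset.range d).image (γ ^ ·) with hGS
  have hGScard : GS.card = d := by
    rw [hGS, Finset.card_image_of_injOn, Finset.card_range]
    intro a ha b hb' hab
    simp only [Finset.coe_range, Set.mem_Iio] at ha hb'
    have h := (pow_eq_pow_iff_mod γ hfin a b).mp hab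
    rwa [← hd, Nat.mod_eq_of_lt ha, Nat.mod_eq_of_lt hb'] at h
  have hGSmem : ∀ t : ZMod p, t ∈ GS ↔ ∃ j, γ ^ j = t := by
    intro t
    rw [hGS]
    simp only [Finset.mem_image, Finset.mem_range]
    constructor
    · rintro ⟨j, -, rfl⟩; exact ⟨j, rfl⟩
    · rintro ⟨j, rfl⟩
      exact ⟨j % d, Nat.mod_lt _ hd0, by rw [hd]; exact pow_mod_orderOf γ j⟩
  have hGS0 : (0 : ZMod p) ∉ GS := by
    rw [hGSmem]
    rintro ⟨j, hj⟩
    exact (pow_ne_zero j hγ0) hj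
  -- zero condition
  have key : ∀ u v : ZMod p, u ≠ 0 → ∀ i : ℕ,
      (u * α ^ i + v * β ^ i = 0 ↔ γ ^ i = -(v * u⁻¹)) := by
    intro u v hu i
    have hβi : β ^ i ≠ 0 := pow_ne_zero i hβ0
    constructor
    · intro h
      apply mul_right_cancel₀ hβi
      rw [hγβ]
      have h' := congrArg (fun x => u⁻¹ * x) h
      simp only [mul_add, mul_zero] at h'
      rw [← mul_assoc, inv_mul_cancel₀ hu, one_mul] at h'
      linear_combination h'
    · intro h
      have h2 : α ^ i = -(v * u⁻¹) * β ^ i := by rw [← hγβ i, h]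
      rw [h2]
      linear_combination (-(v * β ^ i)) * mul_inv_cancel₀ hu
  -- weights
  have hwt00 : fibE p n α β (0, 0) = 0 := by
    funext i; simp [fibE]
  have hwtu : ∀ u v : ZMod p, u ≠ 0 → v = 0 ∨ u = 0 → True := fun _ _ _ _ => trivial
  have hwt_half : ∀ u v : ZMod p, (u ≠ 0 ∧ v = 0) ∨ (u = 0 ∧ v ≠ 0) →
      hammingNorm (fibE p n α β (u, v)) = n := by
    rintro u v h
    rw [hamming_compl]
    have hempty : (Finset.univ.filter fun i : Fin n => fibE p n α β (u, v) i = 0) = ∅ := by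
      rw [Finset.filter_eq_empty_iff]
      intro i _
      simp only [fibE]
      rcases h with ⟨hu, rfl⟩ | ⟨rfl, hv⟩
      · rw [zero_mul, add_zero]
        exact mul_ne_zero hu (pow_ne_zero _ hα0)
      · rw [zero_mul, zero_add]
        exact mul_ne_zero hv (pow_ne_zero _ hβ0)
    rw [hempty, Finset.card_empty, Nat.sub_zero]
  have hwt : ∀ u v : ZMod p, u ≠ 0 → v ≠ 0 →
      hammingNorm (fibE p n α β (u, v))
        = if -(v * u⁻¹) ∈ GS then n - 4 else n := by
    intro u v hu hv
    rw [hamming_compl]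
    have hstep : (Finset.univ.filter fun i : Fin n => fibE p n α β (u, v) i = 0).card
        = ((Finset.range n).filter fun i => γ ^ i = -(v * u⁻¹)).card := by
      rw [← card_filter_fin n (fun i => γ ^ i = -(v * u⁻¹))]
      congr 1
      apply Finset.filter_congr
      intro i _
      exact key u v hu (i : ℕ)
    rw [hstep]
    by_cases hGSy : -(v * u⁻¹) ∈ GS
    · rw [if_pos hGSy]
      obtain ⟨j, hj⟩ := (hGSmem _).mp hGSy
      rw [← hj, count_pow_eq_of_mem γ n hpos hγn j, ← hd, hnd4]
    · rw [if_neg hGSy]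
      rw [count_pow_eq_zero γ n _ (fun j hj => hGSy ((hGSmem _).mpr ⟨j, hj⟩)), Nat.sub_zero]
  -- injectivity
  have hΦinj : Function.Injective (fibE p n α β) := by
    rintro ⟨u, v⟩ ⟨u', v'⟩ h
    have h0 := congrFun h (⟨0, by omega⟩ : Fin n)
    have h1 := congrFun h (⟨1, by omega⟩ : Fin n)
    simp only [fibE] at h0 h1
    norm_num at h0 h1
    have hu : u = u' := by
      have hsub : (u - u') * (α - β) = 0 := by linear_combination h1 - β * h0
      rcases mul_eq_zero.mp hsub with h' | h'
      · exact sub_eq_zero.mp h'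
      · exact absurd (sub_eq_zero.mp h') hne
    have hv : v = v' := by linear_combination h0 - hu
    simp [hu, hv]
  -- translating ncard to pair counting
  have hncard : ∀ w : ℕ, Set.ncard {v | v ∈ fibCode p n ∧ hammingNorm v = w}
      = (Finset.univ.filter
          fun uv : ZMod p × ZMod p => hammingNorm (fibE p n α β uv) = w).card := by
    intro w
    have hset : {v | v ∈ fibCode p n ∧ hammingNorm v = w}
        = fibE p n α β '' {uv | hammingNorm (fibE p n α β uv) = w} := by
      ext v
      simp only [Set.mem_setOf_eq, Set.mem_image]
      constructor
      · rintro ⟨hv, hwv⟩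
        obtain ⟨uv, rfl⟩ := (hmem v).mp hv
        exact ⟨uv, hwv, rfl⟩
      · rintro ⟨uv, hwv, rfl⟩
        exact ⟨(hmem _).mpr ⟨uv, rfl⟩, hwv⟩
    rw [hset, Set.ncard_image_of_injective _ hΦinj]
    rw [show {uv : ZMod p × ZMod p | hammingNorm (fibE p n α β uv) = w}
        = ↑(Finset.univ.filter fun uv : ZMod p × ZMod p => hammingNorm (fibE p n α β uv) = w) by
      ext uv; simp]
    rw [Set.ncard_coe_finset]
  
  have hp4d : p = 4 * d + 1 := by omega
  have hwt0' : hammingNorm (fibE p n α β (0, 0)) = 0 := by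
    rw [hwt00]; exact hammingNorm_eq_zero.mpr rfl
  have htri : ∀ uv : ZMod p × ZMod p,
      hammingNorm (fibE p n α β uv) = 0 ∨ hammingNorm (fibE p n α β uv) = n - 4
        ∨ hammingNorm (fibE p n α β uv) = n := by
    rintro ⟨u, v⟩
    rcases eq_or_ne u 0 with rfl | hu
    · rcases eq_or_ne v 0 with rfl | hv
      · left; exact hwt0'
      · right; right; exact hwt_half 0 v (Or.inr ⟨rfl, hv⟩)
    · rcases eq_or_ne v 0 with rfl | hv
      · right; right; exact hwt_half u 0 (Or.inl ⟨hu, rfl⟩)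
      · rw [hwt u v hu hv]
        by_cases hg : -(v * u⁻¹) ∈ GS
        · right; left; rw [if_pos hg]
        · right; right; rw [if_neg hg]
  have goal1 : Set.ncard {v | v ∈ fibCode p n ∧ hammingNorm v = 0} = 1 := by
    have hseteq : {v | v ∈ fibCode p n ∧ hammingNorm v = 0} = {0} := by
      ext v
      simp only [Set.mem_setOf_eq, Set.mem_singleton_iff, hammingNorm_eq_zero]
      constructor
      · rintro ⟨-, h⟩; exact h
      · rintro rfl; exact ⟨Submodule.zero_mem _, rfl⟩
    rw [hseteq, Set.ncard_singleton]
  have hcard0 : (Finset.univ.filter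
      fun uv : ZMod p × ZMod p => hammingNorm (fibE p n α β uv) = 0).card = 1 := by
    have hseteq : (Finset.univ.filter
        fun uv : ZMod p × ZMod p => hammingNorm (fibE p n α β uv) = 0) = {(0,0)} := by
      ext uv
      simp only [Finset.mem_filter, Finset.mem_univ, true_and, Finset.mem_singleton,
        hammingNorm_eq_zero]
      constructor
      · intro h; exact hΦinj (h.trans hwt00.symm)
      · rintro rfl; exact hwt00
    rw [hseteq, Finset.card_singleton]
  have hcardne : (Finset.univ.filter fun u : ZMod p => u ≠ 0).card = p - 1 := by
    rw [Finset.filter_ne', Finset.card_erase_of_mem (Finset.mem_univ 0),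
      Finset.card_univ, ZMod.card]
  have hcard4 : (Finset.univ.filter
      fun uv : ZMod p × ZMod p => hammingNorm (fibE p n α β uv) = n - 4).card
      = (p - 1) * d := by
    have hfeq : (Finset.univ.filter
        fun uv : ZMod p × ZMod p => hammingNorm (fibE p n α β uv) = n - 4)
        = Finset.univ.filter (fun uv : ZMod p × ZMod p =>
            uv.1 ≠ 0 ∧ uv.2 ≠ 0 ∧ -(uv.2 * uv.1⁻¹) ∈ GS) := by
      ext ⟨u, v⟩
      simp only [Finset.mem_filter, Finset.mem_univ, true_and]
      constructor
      · intro hcase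
        rcases eq_or_ne u 0 with rfl | hu
        · rcases eq_or_ne v 0 with rfl | hv
          · exfalso; rw [hwt0'] at hcase; omega
          · exfalso; rw [hwt_half 0 v (Or.inr ⟨rfl, hv⟩)] at hcase; omega
        · rcases eq_or_ne v 0 with rfl | hv
          · exfalso; rw [hwt_half u 0 (Or.inl ⟨hu, rfl⟩)] at hcase; omega
          · refine ⟨hu, hv, ?_⟩
            rw [hwt u v hu hv] at hcase
            by_contra hg
            rw [if_neg hg] at hcase; omega
      · rintro ⟨hu, hv, hg⟩
        rw [hwt _ _ hu hv, if_pos hg]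
    rw [hfeq]
    have hbij : (Finset.univ.filter (fun uv : ZMod p × ZMod p =>
          uv.1 ≠ 0 ∧ uv.2 ≠ 0 ∧ -(uv.2 * uv.1⁻¹) ∈ GS)).card
        = ((Finset.univ.filter fun u : ZMod p => u ≠ 0) ×ˢ GS).card := by
      refine Finset.card_bij' (fun uv _ => (uv.1, -(uv.2 * uv.1⁻¹)))
        (fun ut _ => (ut.1, -(ut.2 * ut.1))) ?_ ?_ ?_ ?_
      · rintro ⟨u, v⟩ h
        simp only [Finset.mem_filter, Finset.mem_univ, true_and] at h
        simp only [Finset.mem_product, Finset.mem_filter, Finset.mem_univ, true_and]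
        exact ⟨h.1, h.2.2⟩
      · rintro ⟨u, t⟩ h
        simp only [Finset.mem_product, Finset.mem_filter, Finset.mem_univ, true_and] at h
        obtain ⟨hu, ht⟩ := h
        have ht0 : t ≠ 0 := fun h0 => hGS0 (h0 ▸ ht)
        simp only [Finset.mem_filter, Finset.mem_univ, true_and]
        refine ⟨hu, neg_ne_zero.mpr (mul_ne_zero ht0 hu), ?_⟩
        have hsimp : -(-(t * u) * u⁻¹) = t := by
          rw [neg_mul, neg_neg, mul_inv_cancel_right₀ hu]
        rw [hsimp]; exact ht
      · rintro ⟨u, v⟩ h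
        simp only [Finset.mem_filter, Finset.mem_univ, true_and] at h
        have hsimp : -(-(v * u⁻¹) * u) = v := by
          rw [neg_mul, neg_neg, mul_assoc, inv_mul_cancel₀ h.1, mul_one]
        simp [hsimp, mul_assoc, inv_mul_cancel₀ h.1]
      · rintro ⟨u, t⟩ h
        simp only [Finset.mem_product, Finset.mem_filter, Finset.mem_univ, true_and] at h
        have hsimp : -(-(t * u) * u⁻¹) = t := by
          rw [neg_mul, neg_neg, mul_inv_cancel_right₀ h.1]
        simp [hsimp, mul_inv_cancel_right₀ h.1]
    rw [hbij, Finset.card_product, hGScard, hcardne]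
  have hsum : (Finset.univ.filter
        fun uv : ZMod p × ZMod p => hammingNorm (fibE p n α β uv) = 0).card
      + ((Finset.univ.filter
        fun uv : ZMod p × ZMod p => hammingNorm (fibE p n α β uv) = n - 4).card
      + (Finset.univ.filter
        fun uv : ZMod p × ZMod p => hammingNorm (fibE p n α β uv) = n).card)
      = p * p := by
    have hdisj1 : Disjoint
        (Finset.univ.filter fun uv : ZMod p × ZMod p => hammingNorm (fibE p n α β uv) = n - 4)
        (Finset.univ.filter fun uv : ZMod p × ZMod p => hammingNorm (fibE p n α β uv) = n) := by
      rw [Finset.disjoint_left]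
      intro a h1 h2
      simp only [Finset.mem_filter] at h1 h2
      omega
    have hdisj0 : Disjoint
        (Finset.univ.filter fun uv : ZMod p × ZMod p => hammingNorm (fibE p n α β uv) = 0)
        ((Finset.univ.filter fun uv : ZMod p × ZMod p => hammingNorm (fibE p n α β uv) = n - 4)
          ∪ (Finset.univ.filter fun uv : ZMod p × ZMod p => hammingNorm (fibE p n α β uv) = n)) := by
      rw [Finset.disjoint_left]
      intro a h1 h2
      simp only [Finset.mem_union, Finset.mem_filter] at h1 h2
      omega
    have hU : (Finset.univ : Finset (ZMod p × ZMod p)) =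
        (Finset.univ.filter fun uv : ZMod p × ZMod p => hammingNorm (fibE p n α β uv) = 0)
        ∪ ((Finset.univ.filter fun uv : ZMod p × ZMod p => hammingNorm (fibE p n α β uv) = n - 4)
        ∪ (Finset.univ.filter fun uv : ZMod p × ZMod p => hammingNorm (fibE p n α β uv) = n)) := by
      rw [← Finset.filter_or, ← Finset.filter_or]
      exact (Finset.filter_true_of_mem (fun uv _ => htri uv)).symm
    have htotcard : (Finset.univ : Finset (ZMod p × ZMod p)).card = p * p := by
      rw [Finset.card_univ]
      simp [ZMod.card]
    have hstep : (Finset.univ : Finset (ZMod p × ZMod p)).card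
        = (Finset.univ.filter
            fun uv : ZMod p × ZMod p => hammingNorm (fibE p n α β uv) = 0).card
          + ((Finset.univ.filter
            fun uv : ZMod p × ZMod p => hammingNorm (fibE p n α β uv) = n - 4).card
          + (Finset.univ.filter
            fun uv : ZMod p × ZMod p => hammingNorm (fibE p n α β uv) = n).card) := by
      conv_lhs => rw [hU]
      rw [Finset.card_union_of_disjoint hdisj0, Finset.card_union_of_disjoint hdisj1]
    omega
  refine ⟨goal1, ?_, ?_, ?_⟩
  · have h54 : p - 5 = n - 4 := by omega
    rw [h54, hncard, hcard4, show p - 1 = 4 * d from by omega, hn4d]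
    have harith : (4 * d) ^ 2 = 4 * d * d * 4 := by ring
    rw [harith, Nat.mul_div_cancel _ (by norm_num : 0 < 4)]
  · have hCn : (Finset.univ.filter
        fun uv : ZMod p × ZMod p => hammingNorm (fibE p n α β uv) = n).card
        = p * p - 1 - (p - 1) * d := by omega
    rw [hncard, hCn]
    have e1 : p * p = 16 * (d * d) + 8 * d + 1 := by rw [hp4d]; ring
    have e2 : (p - 1) * d = 4 * (d * d) := by
      rw [show p - 1 = 4 * d from by omega]; ring
    have e3 : (p - 1) * (3 * p + 5) = (12 * (d * d) + 8 * d) * 4 := by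
      rw [show p - 1 = 4 * d from by omega, hp4d]; ring
    rw [e3, Nat.mul_div_cancel _ (by norm_num : 0 < 4), e1, e2]
    omega
  · intro w hw0 hw5 hw1
    have hseteq : {v | v ∈ fibCode p n ∧ hammingNorm v = w} = ∅ := by
      ext v
      simp only [Set.mem_setOf_eq, Set.mem_empty_iff_false, iff_false, not_and]
      intro hv hwv
      obtain ⟨uv, rfl⟩ := (hmem v).mp hv
      have h := htri uv
      rw [hwv] at h
      omega
    rw [hseteq, Set.ncard_empty]
end

section
/- Let p be an odd prime with Pisano period l_p = p−1 and β(p) = 2, and let C = ⟨f(x)⟩ be the cyclic code of parameters [p−1, 2, p−3] over F_p generated by the Fibonacci polynomial f(x) (coordinates indexed 0, 1, …, p−2). Then C has exactly (p−3)/2 minimal codewords; coordinate (p−1)/2 belongs to the support of every minimal codeword of C; and each coordinate i with 1 ≤ i ≤ p−2 and i ≠ (p−1)/2 belongs to the support of exactly (p−5)/2 of the minimal codewords of C. -/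
open Polynomial

/-- A minimal codeword of a code `Cc ⊆ F_p^l`: a nonzero codeword `c` with first coordinate
`c 0 = 1` such that every codeword of `Cc` whose support is contained in `supp(c)` is a
scalar multiple of `c`. -/
def IsMinimalCodeword (p l : ℕ) (Cc : Submodule (ZMod p) (Fin l → ZMod p))
    (c : Fin l → ZMod p) : Prop :=
  c ∈ Cc ∧ c ≠ 0 ∧ (∀ h : 0 < l, c ⟨0, h⟩ = 1) ∧
    ∀ v ∈ Cc, (∀ i, v i ≠ 0 → c i ≠ 0) → ∃ k : ZMod p, v = k • c

/-! ### Auxiliary material -/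

namespace FibAux

set_option linter.unusedSectionVars false

lemma twoStep {P : ℕ → Prop} (h0 : P 0) (h1 : P 1)
    (ih : ∀ n, P n → P (n+1) → P (n+2)) : ∀ n, P n := by
  intro n
  induction n using Nat.strong_induction_on with
  | _ n IH =>
    match n with
    | 0 => exact h0
    | 1 => exact h1
    | n+2 => exact ih n (IH n (by omega)) (IH (n+1) (by omega))

variable {p : ℕ}

lemma fib_step (n : ℕ) : fibMod p (n+2) = fibMod p (n+1) + fibMod p n := rfl
lemma fib_zero : fibMod p 0 = 0 := rfl
lemma fib_one : fibMod p 1 = 1 := rfl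

/-- The companion sequence `G n = F (n + l - 1)`. -/
def Gm (p l : ℕ) (n : ℕ) : ZMod p := fibMod p (n + (l - 1))

/-- The `b`-parameter of the codeword vanishing at coordinate `j`. -/
noncomputable def bf (p l j : ℕ) : ZMod p := -(Gm p l j) * (fibMod p j)⁻¹

/-- The general codeword with parameters `(a, b)`. -/
def Vf (p l : ℕ) (a b : ZMod p) : Fin l → ZMod p :=
  fun i => a * Gm p l i + b * fibMod p i

section Period
variable {l : ℕ} (hl2 : 2 ≤ l) (h0 : fibMod p l = 0) (h1 : fibMod p (l+1) = 1)
include hl2 h0 h1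

lemma fib_period : ∀ n, fibMod p (n + l) = fibMod p n := by
  refine twoStep (by simpa [fib_zero] using h0) (by simpa [Nat.add_comm, fib_one] using h1) ?_
  intro n a b
  have e : n + 2 + l = (n + l) + 2 := by omega
  have e1 : n + 1 + l = (n + l) + 1 := by omega
  rw [e, fib_step, ← e1, a, b, fib_step]

lemma fib_add_mul : ∀ k n, fibMod p (n + k * l) = fibMod p n := by
  intro k
  induction k with
  | zero => simp
  | succ k ih =>
    intro n
    have e : n + (k+1) * l = (n + k * l) + l := by ring
    rw [e, fib_period hl2 h0 h1, ih]

lemma fib_mod_reduce (n : ℕ) : fibMod p (n % l) = fibMod p n := by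
  conv_rhs => rw [show n = n % l + (n / l) * l by rw [Nat.mod_add_div' n l]]
  rw [fib_add_mul hl2 h0 h1]

lemma G_zero : Gm p l 0 = 1 := by
  have e1 : l - 1 + 2 = l + 1 := by omega
  have e2 : l - 1 + 1 = l := by omega
  have := fib_step (p := p) (l - 1)
  rw [e1, e2, h1, h0] at this
  simpa [Gm] using this.symm

lemma G_one : Gm p l 1 = 0 := by
  have e : 1 + (l - 1) = l := by omega
  rw [Gm, e, h0]

end Period

lemma G_step (l n : ℕ) : Gm p l (n + 2) = Gm p l (n+1) + Gm p l n := by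
  have e : n + 2 + (l - 1) = (n + (l-1)) + 2 := by omega
  have e1 : n + 1 + (l - 1) = (n + (l-1)) + 1 := by omega
  rw [Gm, Gm, Gm, e, e1, fib_step]

section Wron
variable {l : ℕ} (hl2 : 2 ≤ l) (h0 : fibMod p l = 0) (h1 : fibMod p (l+1) = 1)
include hl2 h0 h1

/-- Casoratian base value. -/
lemma wron_base :
    ∀ i, Gm p l i * fibMod p (i+1) - Gm p l (i+1) * fibMod p i = (-1)^i := by
  intro i
  induction i with
  | zero =>
    rw [show (0:ℕ) + 1 = 1 from rfl, G_zero hl2 h0 h1, G_one hl2 h0 h1, fib_one, fib_zero]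
    ring
  | succ i ih =>
    have e2 : i + 1 + 1 = i + 2 := rfl
    rw [e2, fib_step, G_step, pow_succ]
    linear_combination (-1 : ZMod p) * ih

lemma wron (i : ℕ) :
    ∀ d, Gm p l i * fibMod p (i + d) - Gm p l (i + d) * fibMod p i
      = (-1)^i * fibMod p d := by
  refine twoStep ?_ ?_ ?_
  · rw [fib_zero, Nat.add_zero]; ring
  · simpa [fib_one] using wron_base hl2 h0 h1 i
  intro d a b
  have e : i + (d + 2) = (i + d) + 2 := by omega
  have e1 : i + (d + 1) = (i + d) + 1 := by omega
  rw [e, fib_step, G_step, fib_step]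
  rw [e1] at b
  linear_combination a + b

/-- If a nonzero combination vanishes at two places, the index difference is a zero of `F`. -/
lemma two_zero [Fact p.Prime] (a b : ZMod p) (i d : ℕ)
    (hi : a * Gm p l i + b * fibMod p i = 0)
    (hj : a * Gm p l (i + d) + b * fibMod p (i + d) = 0) :
    a * fibMod p d = 0 ∧ b * fibMod p d = 0 := by
  have w := wron hl2 h0 h1 i d
  have hne : ((-1 : ZMod p))^i ≠ 0 := pow_ne_zero _ (neg_ne_zero.mpr one_ne_zero)
  constructor
  · have key : (-1 : ZMod p)^i * (a * fibMod p d) = 0 := by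
      linear_combination (-a) * w + fibMod p (i+d) * hi - fibMod p i * hj
    rcases mul_eq_zero.mp key with h | h
    · exact absurd h hne
    · exact h
  · have key : (-1 : ZMod p)^i * (b * fibMod p d) = 0 := by
      linear_combination (-b) * w - Gm p l (i+d) * hi + Gm p l i * hj
    rcases mul_eq_zero.mp key with h | h
    · exact absurd h hne
    · exact h

end Wron

section Code
variable {l : ℕ} (hpis : pisano p = l) (hl2 : 2 ≤ l)
  (h0 : fibMod p l = 0) (h1 : fibMod p (l+1) = 1)

include hpis in
lemma polyVec_fib : polyVec p l (fibPoly p) = Vf p l 0 1 := by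
  funext i
  simp only [polyVec, fibPoly, hpis, Vf, finset_sum_coeff, coeff_C_mul, coeff_X_pow,
    mul_ite, mul_one, mul_zero]
  rw [Finset.sum_ite_eq (Finset.range l) (i : ℕ) (fun j => fibMod p j)]
  simp [i.isLt]

include hl2 h0 h1 in
lemma shift_Vf (a b : ZMod p) :
    cyclicShift p l (Vf p l a b) = Vf p l (b - a) a := by
  funext i
  simp only [cyclicShift, Vf]
  set m : ℕ := (i : ℕ) + (l - 1) with hm
  have hFm : fibMod p (m % l) = fibMod p m := fib_mod_reduce hl2 h0 h1 m
  have hGm : Gm p l (m % l) = fibMod p ((i : ℕ) + (l-2)) := by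
    have e0 : m % l + (l-1) + (m / l) * l = m + (l - 1) := by
      have := Nat.mod_add_div' m l; omega
    calc Gm p l (m % l) = fibMod p (m % l + (l-1)) := rfl
      _ = fibMod p (m % l + (l-1) + (m/l) * l) := (fib_add_mul hl2 h0 h1 _ _).symm
      _ = fibMod p ((i : ℕ) + (l-2) + l) := by rw [e0]; congr 1; omega
      _ = fibMod p ((i : ℕ) + (l-2)) := fib_period hl2 h0 h1 _
  have hFm2 : fibMod p m = Gm p l (i : ℕ) := rfl
  have key : fibMod p ((i : ℕ)) = Gm p l (i : ℕ) + fibMod p ((i : ℕ) + (l-2)) := by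
    have hFi : fibMod p ((i : ℕ) + l) = fibMod p (i : ℕ) := fib_period hl2 h0 h1 _
    have e : (i : ℕ) + (l-2) + 2 = (i : ℕ) + l := by omega
    have e1 : (i : ℕ) + (l-2) + 1 = (i : ℕ) + (l-1) := by omega
    rw [← hFi, ← e, fib_step, e1]; rfl
  rw [hGm, hFm, hFm2]
  linear_combination (-a) * key

include hpis hl2 h0 h1 in
lemma mem_fibCode (c : Fin l → ZMod p) :
    c ∈ fibCode p l ↔ ∃ a b, c = Vf p l a b := by
  constructor
  · intro hc
    refine Submodule.span_induction ?_ ?_ ?_ ?_ hc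
    · rintro x ⟨k, rfl⟩
      clear hc
      induction k with
      | zero => exact ⟨0, 1, by simpa using polyVec_fib hpis⟩
      | succ k ih =>
        obtain ⟨a, b, hab⟩ := ih
        rw [Function.iterate_succ_apply', hab, shift_Vf hl2 h0 h1]
        exact ⟨b - a, a, rfl⟩
    · exact ⟨0, 0, by funext i; simp [Vf]⟩
    · rintro x y _ _ ⟨a, b, rfl⟩ ⟨a', b', rfl⟩
      exact ⟨a + a', b + b', by funext i; simp [Vf]; ring⟩
    · rintro r x _ ⟨a, b, rfl⟩
      exact ⟨r * a, r * b, by funext i; simp [Vf]; ring⟩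
  · rintro ⟨a, b, rfl⟩
    have h01 : Vf p l 0 1 = (cyclicShift p l)^[0] (polyVec p l (fibPoly p)) := by
      simpa using (polyVec_fib hpis).symm
    have h10 : Vf p l 1 0 = (cyclicShift p l)^[1] (polyVec p l (fibPoly p)) := by
      rw [Function.iterate_one, polyVec_fib hpis, shift_Vf hl2 h0 h1]
      norm_num
    have hdec : Vf p l a b = a • Vf p l 1 0 + b • Vf p l 0 1 := by
      funext i
      simp only [Pi.add_apply, Pi.smul_apply, smul_eq_mul, Vf]
      ring
    rw [hdec]
    exact Submodule.add_mem _
      (Submodule.smul_mem _ _ (Submodule.subset_span ⟨1, h10⟩))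
      (Submodule.smul_mem _ _ (Submodule.subset_span ⟨0, h01⟩))

end Code
end FibAux

open FibAux in
/-- For an odd prime `p` with `l_p = p - 1` and `β(p) = 2`, the
`[p-1, 2, p-3]` cyclic code `C = ⟨f(x)⟩` has exactly `(p-3)/2` minimal codewords;
coordinate `(p-1)/2` lies in the support of every minimal codeword (a dictatorial
participant); and every other coordinate `i` with `1 ≤ i ≤ p - 2`, `i ≠ (p-1)/2`, lies in
the support of exactly `(p-5)/2` of them. -/
theorem fibCode_minimal_codewords_beta_two (p : ℕ) [Fact p.Prime] (hodd : Odd p)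
    (hl : pisano p = p - 1) (hb : betaP p = 2) :
    Set.ncard {c | IsMinimalCodeword p (p - 1) (fibCode p (p - 1)) c} = (p - 3) / 2 ∧
      (∀ i : Fin (p - 1), (i : ℕ) = (p - 1) / 2 →
        ∀ c, IsMinimalCodeword p (p - 1) (fibCode p (p - 1)) c → c i ≠ 0) ∧
      ∀ i : Fin (p - 1), 1 ≤ (i : ℕ) → (i : ℕ) ≠ (p - 1) / 2 →
        Set.ncard {c | IsMinimalCodeword p (p - 1) (fibCode p (p - 1)) c ∧ c i ≠ 0}
          = (p - 5) / 2 := by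
  have hp := (Fact.out : p.Prime)
  haveI : Fact (1 < p) := ⟨hp.one_lt⟩
  have hp3 : 3 ≤ p := by
    rcases hodd with ⟨k, hk⟩
    have := hp.two_le; omega
  set l : ℕ := p - 1 with hldef
  have hlpos : 0 < l := by omega
  have hl2 : 2 ≤ l := by omega
  have hl1lt : 1 < l := by omega
  -- basic pisano facts
  have hne : {t : ℕ | 0 < t ∧ fibMod p t = 0 ∧ fibMod p (t+1) = 1}.Nonempty := by
    by_contra h
    rw [Set.not_nonempty_iff_eq_empty] at h
    have hz : pisano p = 0 := by rw [pisano, h, Nat.sInf_empty]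
    omega
  obtain ⟨-, h0, h1⟩ : 0 < pisano p ∧ fibMod p (pisano p) = 0 ∧ fibMod p (pisano p + 1) = 1 :=
    Nat.sInf_mem hne
  rw [hl] at h0 h1
  have hmin : ∀ t, 0 < t → t < l → ¬(fibMod p t = 0 ∧ fibMod p (t+1) = 1) := by
    intro t ht htl hc
    rw [← hl] at htl
    exact Nat.notMem_of_lt_sInf htl ⟨ht, hc.1, hc.2⟩
  -- the zero set of F on [0, l)
  have hbcard : ((Finset.range l).filter fun i => fibMod p i = 0).card = 2 := by
    have hb' := hb
    unfold betaP at hb'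
    rwa [hl] at hb'
  obtain ⟨x, y, hxy, hZset⟩ := Finset.card_eq_two.mp hbcard
  have hZmem : ∀ i, (i ∈ (Finset.range l).filter fun j => fibMod p j = 0) ↔ (i = x ∨ i = y) := by
    intro i; rw [hZset]; simp
  have h0mem : ((0:ℕ) = x ∨ (0:ℕ) = y) := by
    rw [← hZmem]
    simp [Finset.mem_filter, Finset.mem_range, hlpos, fib_zero]
  have hmemxy : ∀ w : ℕ, w = x ∨ w = y → w < l ∧ fibMod p w = 0 := by
    intro w hw
    have := (hZmem w).mpr hw
    simpa [Finset.mem_filter, Finset.mem_range] using this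
  obtain ⟨z, hz0, hzl, hFz, hZchar⟩ :
      ∃ z, 0 < z ∧ z < l ∧ fibMod p z = 0 ∧
        ∀ i, i < l → fibMod p i = 0 → i = 0 ∨ i = z := by
    rcases h0mem with h | h
    · obtain ⟨h1y, h2y⟩ := hmemxy y (Or.inr rfl)
      refine ⟨y, by omega, h1y, h2y, ?_⟩
      intro i hi hFi
      have := (hZmem i).mp (by simp [Finset.mem_filter, Finset.mem_range, hi, hFi])
      omega
    · obtain ⟨h1x, h2x⟩ := hmemxy x (Or.inl rfl)
      refine ⟨x, by omega, h1x, h2x, ?_⟩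
      intro i hi hFi
      have := (hZmem i).mp (by simp [Finset.mem_filter, Finset.mem_range, hi, hFi])
      omega
  have hz1 : z ≠ 1 := by
    intro h
    rw [h, fib_one] at hFz
    exact one_ne_zero hFz
  have hz2 : 2 ≤ z := by omega
  -- l = 2z
  have hwz : fibMod p (l - z) = 0 := by
    have w := wron hl2 h0 h1 z (l - z)
    rw [show z + (l - z) = l by omega, h0, hFz] at w
    have key : (-1 : ZMod p)^z * fibMod p (l - z) = 0 := by linear_combination -w
    rcases mul_eq_zero.mp key with h | h
    · exact absurd h (pow_ne_zero _ (neg_ne_zero.mpr one_ne_zero))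
    · exact h
  have hl2z : l = 2 * z := by
    have := hZchar (l - z) (by omega) hwz
    omega
  -- shift-by-z structure
  have hFzshift : ∀ n, fibMod p (n + z) = fibMod p (z + 1) * fibMod p n := by
    refine twoStep ?_ ?_ ?_
    · rw [Nat.zero_add, hFz, fib_zero, mul_zero]
    · rw [fib_one, mul_one, Nat.add_comm]
    · intro n a b
      have e2 : n + 2 + z = (n + z) + 2 := by omega
      have e1 : n + 1 + z = (n + z) + 1 := by omega
      rw [e2, fib_step, fib_step, ← e1, a, b]
      ring
  have hs2 : fibMod p (z+1) * fibMod p (z+1) = 1 := by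
    have hh := hFzshift (z + 1)
    rw [show z + 1 + z = l + 1 by omega, h1] at hh
    exact hh.symm
  have hsneg : fibMod p (z+1) = -1 := by
    rcases mul_self_eq_one_iff.mp hs2 with h | h
    · exact absurd ⟨hFz, h⟩ (hmin z hz0 hzl)
    · exact h
  have hFs : ∀ n, fibMod p (n + z) = -fibMod p n := by
    intro n; rw [hFzshift n, hsneg]; ring
  have hGs : ∀ n, Gm p l (n + z) = -Gm p l n := by
    intro n
    show fibMod p (n + z + (l-1)) = -fibMod p (n + (l-1))
    rw [show n + z + (l-1) = (n + (l-1)) + z by omega, hFs]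
  have hGz : Gm p l z = -1 := by
    have hh := hGs 0
    rw [show (0:ℕ) + z = z by omega, G_zero hl2 h0 h1] at hh
    simpa using hh
  have hFne : ∀ j, j < l → j ≠ 0 → j ≠ z → fibMod p j ≠ 0 := by
    intro j hj hj0 hjz hF
    rcases hZchar j hj hF with h | h
    · exact hj0 h
    · exact hjz h
  -- code characterization
  have hcode : ∀ c : Fin l → ZMod p, c ∈ fibCode p l ↔ ∃ a b, c = Vf p l a b :=
    fun c => mem_fibCode hl hl2 h0 h1 c
  -- properties of bf
  have bf_spec : ∀ j, fibMod p j ≠ 0 → Gm p l j + bf p l j * fibMod p j = 0 := by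
    intro j hj
    have hinv : (fibMod p j)⁻¹ * fibMod p j = 1 := inv_mul_cancel₀ hj
    simp only [bf]
    linear_combination (-(Gm p l j)) * hinv
  have bf_unique : ∀ (b : ZMod p) j, fibMod p j ≠ 0 →
      Gm p l j + b * fibMod p j = 0 → b = bf p l j := by
    intro b j hj hzero
    have h2 := bf_spec j hj
    have hsub : (b - bf p l j) * fibMod p j = 0 := by linear_combination hzero - h2
    rcases mul_eq_zero.mp hsub with h | h
    · exact sub_eq_zero.mp h
    · exact absurd h hj
  -- coordinate evaluations
  have hVf0 : ∀ a b : ZMod p, Vf p l a b ⟨0, hlpos⟩ = a := by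
    intro a b
    show a * Gm p l 0 + b * fibMod p 0 = a
    rw [G_zero hl2 h0 h1, fib_zero]; ring
  have hVf1 : ∀ a b : ZMod p, Vf p l a b ⟨1, hl1lt⟩ = b := by
    intro a b
    show a * Gm p l 1 + b * fibMod p 1 = b
    rw [G_one hl2 h0 h1, fib_one]; ring
  -- characterization of minimal codewords
  have hMainChar : ∀ c, IsMinimalCodeword p l (fibCode p l) c ↔
      ∃ j ∈ Set.Ioo 0 z, c = Vf p l 1 (bf p l j) := by
    intro c
    constructor
    · rintro ⟨hcC, hc0, hcone, hcmin⟩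
      obtain ⟨a, b, rfl⟩ := (hcode c).mp hcC
      have ha : a = 1 := by
        have hh := hcone hlpos
        rwa [hVf0] at hh
      subst ha
      have hzero : ∃ i0 : Fin l, Vf p l 1 b i0 = 0 := by
        by_contra hno
        push_neg at hno
        obtain ⟨k, hk⟩ := hcmin (Vf p l 0 1) ((hcode _).mpr ⟨0, 1, rfl⟩) (fun i _ => hno i)
        have h00 := congrFun hk ⟨0, hlpos⟩
        rw [hVf0, Pi.smul_apply, smul_eq_mul, hVf0, mul_one] at h00
        have h11 := congrFun hk ⟨1, hl1lt⟩
        rw [hVf1, Pi.smul_apply, smul_eq_mul, hVf1, ← h00, zero_mul] at h11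
        exact one_ne_zero h11
      obtain ⟨i0f, hi0⟩ := hzero
      have hi0' : (1:ZMod p) * Gm p l (i0f : ℕ) + b * fibMod p (i0f : ℕ) = 0 := hi0
      have hne0 : (i0f : ℕ) ≠ 0 := by
        intro h
        have hfe : i0f = ⟨0, hlpos⟩ := Fin.ext h
        rw [hfe, hVf0] at hi0
        exact one_ne_zero hi0
      have hnez : (i0f : ℕ) ≠ z := by
        intro h
        have hval : Vf p l 1 b i0f = -1 := by
          show (1:ZMod p) * Gm p l (i0f:ℕ) + b * fibMod p (i0f:ℕ) = -1
          rw [h, hGz, hFz]; ring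
        rw [hi0] at hval
        exact (neg_ne_zero.mpr one_ne_zero) hval.symm
      have hFi0 : fibMod p (i0f : ℕ) ≠ 0 := hFne _ i0f.isLt hne0 hnez
      have hbb : b = bf p l (i0f : ℕ) :=
        bf_unique b _ hFi0 (by linear_combination hi0')
      rcases Nat.lt_or_ge (i0f : ℕ) z with hlt | hge
      · exact ⟨(i0f:ℕ), ⟨Nat.pos_of_ne_zero hne0, hlt⟩, by rw [hbb]⟩
      · have hgt : z < (i0f : ℕ) := by omega
        have hil : (i0f : ℕ) < l := i0f.isLt
        refine ⟨(i0f:ℕ) - z, ⟨by omega, by omega⟩, ?_⟩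
        have hFj : fibMod p ((i0f:ℕ) - z) ≠ 0 := hFne _ (by omega) (by omega) (by omega)
        have hbfe : bf p l (i0f : ℕ) = bf p l ((i0f:ℕ) - z) := by
          conv_lhs => rw [show (i0f:ℕ) = ((i0f:ℕ) - z) + z by omega]
          simp only [bf]
          rw [hFs, hGs, inv_neg]
          ring
        rw [hbb, hbfe]
    · rintro ⟨j, ⟨hj0, hjz⟩, rfl⟩
      have hjl : j < l := by omega
      have hFj : fibMod p j ≠ 0 := hFne j hjl (by omega) (by omega)
      have hjzero : Vf p l 1 (bf p l j) ⟨j, hjl⟩ = 0 := by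
        show (1:ZMod p) * Gm p l j + bf p l j * fibMod p j = 0
        rw [one_mul]
        exact bf_spec j hFj
      refine ⟨(hcode _).mpr ⟨1, bf p l j, rfl⟩, ?_, ?_, ?_⟩
      · intro h
        have hh := congrFun h ⟨0, hlpos⟩
        rw [hVf0] at hh
        exact one_ne_zero hh
      · intro h
        exact hVf0 1 (bf p l j)
      · intro v hv hsupp
        obtain ⟨a', b', rfl⟩ := (hcode v).mp hv
        have hvz : Vf p l a' b' ⟨j, hjl⟩ = 0 := by
          by_contra hnz
          exact (hsupp _ hnz) hjzero
        have hvz' : a' * Gm p l j + b' * fibMod p j = 0 := hvz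
        have hb' : b' = a' * bf p l j := by
          have h2 := bf_spec j hFj
          have hsub : (b' - a' * bf p l j) * fibMod p j = 0 := by
            linear_combination hvz' - a' * h2
          rcases mul_eq_zero.mp hsub with h | h
          · exact sub_eq_zero.mp h
          · exact absurd h hFj
        refine ⟨a', ?_⟩
        funext i
        simp only [Pi.smul_apply, smul_eq_mul, Vf]
        rw [hb']; ring
  -- injectivity
  have hinj2 : ∀ i j : ℕ, i ∈ Set.Ioo 0 z → j ∈ Set.Ioo 0 z →
      bf p l i = bf p l j → i = j := by
    have key : ∀ i j : ℕ, i ∈ Set.Ioo 0 z → j ∈ Set.Ioo 0 z → i ≤ j →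
        bf p l i = bf p l j → i = j := by
      rintro i j ⟨hi0, hiz⟩ ⟨hj0, hjz⟩ hij hbfe
      have hFi : fibMod p i ≠ 0 := hFne i (by omega) (by omega) (by omega)
      have hFj : fibMod p j ≠ 0 := hFne j (by omega) (by omega) (by omega)
      have h2 : (1:ZMod p) * Gm p l i + bf p l i * fibMod p i = 0 := by
        rw [one_mul]; exact bf_spec i hFi
      have h3 : (1:ZMod p) * Gm p l (i + (j - i)) + bf p l i * fibMod p (i + (j-i)) = 0 := by
        rw [show i + (j - i) = j by omega, one_mul, hbfe]
        exact bf_spec j hFj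
      have hFd := (two_zero hl2 h0 h1 1 (bf p l i) i (j-i) h2 h3).1
      rw [one_mul] at hFd
      by_contra hneq
      have hd := hZchar (j - i) (by omega) hFd
      omega
    intro i j hi hj hbfe
    rcases Nat.le_total i j with h | h
    · exact key i j hi hj h hbfe
    · exact (key j i hj hi h hbfe.symm).symm
  have hPhiInj : Set.InjOn (fun j => Vf p l 1 (bf p l j)) (Set.Ioo 0 z) := by
    intro i hi j hj hEq
    apply hinj2 i j hi hj
    have hh := congrFun hEq ⟨1, hl1lt⟩
    simp only at hh
    rwa [hVf1, hVf1] at hh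
  have hSncard : (Set.Ioo (0:ℕ) z).ncard = z - 1 := by
    rw [← Finset.coe_Ioo, Set.ncard_coe_finset, Nat.card_Ioo]
    omega
  -- part 1
  have part1 : Set.ncard {c | IsMinimalCodeword p l (fibCode p l) c} = (p - 3) / 2 := by
    have hsetEq : {c | IsMinimalCodeword p l (fibCode p l) c}
        = (fun j => Vf p l 1 (bf p l j)) '' (Set.Ioo 0 z) := by
      ext c
      simp only [Set.mem_setOf_eq, Set.mem_image]
      rw [hMainChar c]
      constructor
      · rintro ⟨j, hj, rfl⟩; exact ⟨j, hj, rfl⟩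
      · rintro ⟨j, hj, rfl⟩; exact ⟨j, hj, rfl⟩
    rw [hsetEq, Set.ncard_image_of_injOn hPhiInj, hSncard]
    omega
  refine ⟨part1, ?_, ?_⟩
  -- part 2
  · intro i hi c hc
    obtain ⟨j, hj, rfl⟩ := (hMainChar c).mp hc
    have hiz : (i : ℕ) = z := by omega
    show ¬((1:ZMod p) * Gm p l (i:ℕ) + bf p l j * fibMod p (i:ℕ) = 0)
    rw [hiz, hGz, hFz]
    intro h
    have hone : (1:ZMod p) = 0 := by linear_combination -h
    exact one_ne_zero hone
  -- part 3
  · intro i hi1 hine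
    have hizne : (i:ℕ) ≠ z := by omega
    have hil : (i:ℕ) < l := i.isLt
    obtain ⟨r, hr0, hrz, hrdef⟩ : ∃ r, 0 < r ∧ r < z ∧ (r = (i:ℕ) ∨ r + z = (i:ℕ)) := by
      by_cases h : (i:ℕ) < z
      · exact ⟨(i:ℕ), by omega, h, Or.inl rfl⟩
      · exact ⟨(i:ℕ) - z, by omega, by omega, Or.inr (by omega)⟩
    have hFr : fibMod p r ≠ 0 := hFne r (by omega) (by omega) (by omega)
    have hrzero : (1:ZMod p) * Gm p l (i:ℕ) + bf p l r * fibMod p (i:ℕ) = 0 := by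
      rcases hrdef with h | h
      · rw [one_mul, ← h]
        exact bf_spec r hFr
      · rw [one_mul, ← h, hFs, hGs]
        linear_combination -(bf_spec r hFr)
    have huniq : ∀ j, j ∈ Set.Ioo 0 z →
        ((1:ZMod p) * Gm p l (i:ℕ) + bf p l j * fibMod p (i:ℕ) = 0) → j = r := by
      rintro j ⟨hj0, hjz⟩ hjvanish
      have hFj : fibMod p j ≠ 0 := hFne j (by omega) (by omega) (by omega)
      have hself : (1:ZMod p) * Gm p l j + bf p l j * fibMod p j = 0 := by
        rw [one_mul]; exact bf_spec j hFj
      rcases Nat.le_total j (i:ℕ) with h | h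
      · have h3 : (1:ZMod p) * Gm p l (j + ((i:ℕ) - j))
            + bf p l j * fibMod p (j + ((i:ℕ)-j)) = 0 := by
          rw [show j + ((i:ℕ)-j) = (i:ℕ) by omega]
          exact hjvanish
        have hFd := (two_zero hl2 h0 h1 1 (bf p l j) j _ hself h3).1
        rw [one_mul] at hFd
        rcases Nat.eq_zero_or_pos ((i:ℕ) - j) with h' | h'
        · omega
        · have hd := hZchar _ (show (i:ℕ) - j < l by omega) hFd
          omega
      · have h3 : (1:ZMod p) * Gm p l ((i:ℕ) + (j - (i:ℕ)))
            + bf p l j * fibMod p ((i:ℕ) + (j - (i:ℕ))) = 0 := by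
          rw [show (i:ℕ) + (j - (i:ℕ)) = j by omega]
          exact hself
        have hFd := (two_zero hl2 h0 h1 1 (bf p l j) (i:ℕ) _ hjvanish h3).1
        rw [one_mul] at hFd
        rcases Nat.eq_zero_or_pos (j - (i:ℕ)) with h' | h'
        · omega
        · have hd := hZchar _ (show j - (i:ℕ) < l by omega) hFd
          omega
    have hsetEq3 : {c | IsMinimalCodeword p l (fibCode p l) c ∧ c i ≠ 0}
        = (fun j => Vf p l 1 (bf p l j)) '' (Set.Ioo 0 z \ {r}) := by
      ext c
      simp only [Set.mem_setOf_eq, Set.mem_image, Set.mem_diff, Set.mem_singleton_iff]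
      constructor
      · rintro ⟨hmin', hci⟩
        obtain ⟨j, hj, rfl⟩ := (hMainChar _).mp hmin'
        refine ⟨j, ⟨hj, ?_⟩, rfl⟩
        intro hjr
        apply hci
        show (1:ZMod p) * Gm p l (i:ℕ) + bf p l j * fibMod p (i:ℕ) = 0
        rw [hjr]
        exact hrzero
      · rintro ⟨j, ⟨hj, hjr⟩, rfl⟩
        refine ⟨(hMainChar _).mpr ⟨j, hj, rfl⟩, ?_⟩
        intro hci
        exact hjr (huniq j hj hci)
    have hrmem : r ∈ Set.Ioo 0 z := ⟨hr0, hrz⟩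
    rw [hsetEq3, Set.ncard_image_of_injOn (hPhiInj.mono Set.diff_subset),
      Set.ncard_diff_singleton_of_mem hrmem, hSncard]
    omega
end
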